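/- Let d be an odd prime and q = p^r a prime power with p an odd prime, p ≠ d and q ≢ 1 (mod d). Let λ ∈ F_q with λ ≠ 0. Then q(q-1)·#X_λ^d(F_q) = q^d − 1 + Σ_{a=0}^{q-2} g(T^{-a})^d · g(T^{da}) · T^{-da}(−dλ), where #X_λ^d(F_q) is the number of projective points of the Dwork hypersurface over F_q. -/

import Mathlib

/-- The number of points of the Dwork hypersurface
`x₁^d + ⋯ + x_d^d = d·λ·x₁⋯x_d` in `ℙ^{d-1}(F)`: equivalence classes of
nonzero solutions, two solutions being identified iff they differ by a
nonzero scalar. -/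
noncomputable def dworkProjCount (F : Type) [Field F] [Fintype F] (d : ℕ) (lam : F) : ℕ :=
  Nat.card (Quot (fun x y : {v : Fin d → F // v ≠ 0 ∧
      ∑ i, v i ^ d = (d : F) * lam * ∏ i, v i} =>
    ∃ c : Fˣ, (fun i => (c : F) * x.1 i) = y.1))

open Finset

section Count
variable {F : Type} [Field F] [Fintype F] {d : ℕ} {lam : F}

private abbrev SolT (F : Type) [Field F] [Fintype F] (d : ℕ) (lam : F) :=
  {v : Fin d → F // v ≠ 0 ∧ ∑ i, v i ^ d = (d : F) * lam * ∏ i, v i}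

private def Rrel (F : Type) [Field F] [Fintype F] (d : ℕ) (lam : F) :
    SolT F d lam → SolT F d lam → Prop :=
  fun x y => ∃ c : Fˣ, (fun i => (c : F) * x.1 i) = y.1

private def smulSol (c : Fˣ) (x : SolT F d lam) : SolT F d lam := by
  refine ⟨fun i => (c : F) * x.1 i, ?_, ?_⟩
  · intro h
    apply x.2.1
    funext i
    have := congrFun h i
    simp only [Pi.zero_apply] at this ⊢
    exact (mul_eq_zero.mp this).resolve_left c.ne_zero
  · have h1 : ∑ i, ((c : F) * x.1 i) ^ d = (c : F) ^ d * ∑ i, x.1 i ^ d := by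
      rw [Finset.mul_sum]; congr 1; funext i; ring
    have h2 : ∏ i, ((c : F) * x.1 i) = (c : F) ^ d * ∏ i, x.1 i := by
      rw [Finset.prod_mul_distrib, Finset.prod_const, Finset.card_univ, Fintype.card_fin]
    rw [h1, h2, x.2.2]; ring

private lemma Rrel_equiv : Equivalence (Rrel F d lam) := by
  constructor
  · intro x; exact ⟨1, by simp⟩
  · rintro x y ⟨c, hc⟩
    refine ⟨c⁻¹, ?_⟩
    funext i
    have := congrFun hc i
    rw [← this]
    field_simp
    rw [Units.inv_mul, one_mul]
  · rintro x y z ⟨c, hc⟩ ⟨e, he⟩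
    refine ⟨e * c, ?_⟩
    funext i
    have h1 := congrFun hc i
    have h2 := congrFun he i
    rw [← h2, ← h1, Units.val_mul]; ring

lemma card_sol_eq (hd : d ≠ 0) :
    (Fintype.card F - 1) * dworkProjCount F d lam = Nat.card (SolT F d lam) := by
  classical
  set R := Rrel F d lam with hR
  have hfib : ∀ y : Quot R, Nat.card {x : SolT F d lam // Quot.mk R x = y} = Fintype.card Fˣ := by
    intro y
    obtain ⟨v₀, rfl⟩ := Quot.exists_rep y
    have hbij : Function.Bijective
        (fun c : Fˣ => (⟨smulSol c v₀, (Quot.sound (⟨c, rfl⟩ : R v₀ (smulSol c v₀))).symm⟩ :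
          {x : SolT F d lam // Quot.mk R x = Quot.mk R v₀})) := by
      constructor
      · intro c c' h
        obtain ⟨i, hi⟩ : ∃ i, v₀.1 i ≠ 0 := by
          by_contra hcon
          push_neg at hcon
          exact v₀.2.1 (funext fun i => hcon i)
        have := congrFun (congrArg (fun z => (z.1 : SolT F d lam).1) h) i
        simp only [smulSol] at this
        exact Units.ext (mul_right_cancel₀ hi this)
      · rintro ⟨x, hx⟩
        have : Relation.EqvGen R v₀ x := Quot.eq.mp hx.symm
        obtain ⟨c, hc⟩ := (Rrel_equiv.eqvGen_iff).mp this
        exact ⟨c, by simp only [Subtype.mk.injEq]; exact Subtype.ext hc⟩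
    rw [← Nat.card_eq_fintype_card (α := Fˣ)]
    exact (Nat.card_congr (Equiv.ofBijective _ hbij)).symm
  have key : Nat.card (SolT F d lam) = Nat.card (Quot R) * Fintype.card Fˣ := by
    have e1 : SolT F d lam ≃ Σ y : Quot R, {x : SolT F d lam // Quot.mk R x = y} :=
      (Equiv.sigmaFiberEquiv (Quot.mk R)).symm
    letI : Fintype (SolT F d lam) := Fintype.ofFinite _
    letI : Fintype (Quot R) := Fintype.ofFinite _
    letI : ∀ y : Quot R, Fintype {x : SolT F d lam // Quot.mk R x = y} :=
      fun y => Fintype.ofFinite _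
    rw [Nat.card_eq_fintype_card, Fintype.card_congr e1, Fintype.card_sigma]
    have hfib' : ∀ y : Quot R, Fintype.card {x : SolT F d lam // Quot.mk R x = y}
        = Fintype.card Fˣ := fun y => by
      rw [← Nat.card_eq_fintype_card, hfib]
    simp_rw [hfib']
    rw [Finset.sum_const, Finset.card_univ, smul_eq_mul, Nat.card_eq_fintype_card]
  rw [dworkProjCount, key, Fintype.card_units, mul_comm]
  rfl
end Count

section Chars
variable {F : Type} [Field F] [Fintype F] [DecidableEq F]

lemma sum_units_erase (g : F → ℂ) :
    ∑ x : Fˣ, g x = ∑ x ∈ (univ : Finset F).erase 0, g x := by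
  rw [Fintype.sum_equiv unitsEquivNeZero (fun u => g u)
    (fun x : {a : F // a ≠ 0} => g x) (fun u => rfl)]
  exact (Finset.sum_subtype (p := fun a : F => a ≠ 0) (univ.erase 0)
    (fun x => by simp [Finset.mem_erase]) g).symm

lemma sum_F_split (g : F → ℂ) : ∑ x : F, g x = g 0 + ∑ x : Fˣ, g x := by
  rw [sum_units_erase, ← Finset.sum_erase_add (univ : Finset F) g (Finset.mem_univ 0), add_comm]

lemma sum_units_of_zero (g : F → ℂ) (h0 : g 0 = 0) : ∑ x : Fˣ, g x = ∑ x : F, g x := by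
  rw [sum_units_erase, ← Finset.sum_erase_add (univ : Finset F) g (Finset.mem_univ 0), h0, add_zero]

variable (T : MulChar F ℂ)

lemma Tpow_congr {a b : ℕ} (h : a ≡ b [MOD Fintype.card Fˣ]) : T ^ a = T ^ b := by
  have key : ∀ c : ℕ, T ^ c = T ^ (c % Fintype.card Fˣ) := by
    intro c
    conv_lhs => rw [← Nat.div_add_mod c (Fintype.card Fˣ)]
    rw [pow_add, pow_mul, MulChar.pow_card_eq_one, one_pow, one_mul]
  rw [key a, key b, h]

lemma upow_congr (u : Fˣ) {a b : ℕ} (h : a ≡ b [MOD Fintype.card Fˣ]) : u ^ a = u ^ b := by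
  have key : ∀ c : ℕ, u ^ c = u ^ (c % Fintype.card Fˣ) := by
    intro c
    conv_lhs => rw [← Nat.div_add_mod c (Fintype.card Fˣ)]
    rw [pow_add, pow_mul, pow_card_eq_one, one_pow, one_mul]
  rw [key a, key b, h]

lemma T_inj (hT : ∀ χ : MulChar F ℂ, ∃ n : ℕ, χ = T ^ n) :
    ∀ z : Fˣ, T (z : F) = 1 → z = 1 := by
  intro z hz
  by_contra hne
  have hzne : (z : F) ≠ 1 := fun h => hne (Units.ext h)
  haveI : NeZero ((Monoid.exponent Fˣ : ℕ) : ℂ) :=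
    ⟨Nat.cast_ne_zero.mpr (Monoid.exponent_ne_zero_of_finite)⟩
  obtain ⟨χ, hχ⟩ := MulChar.exists_apply_ne_one_of_hasEnoughRootsOfUnity F ℂ hzne
  obtain ⟨m, rfl⟩ := hT χ
  apply hχ
  rw [MulChar.pow_apply_coe, hz, one_pow]

lemma char_val_pow_card (χ : MulChar F ℂ) (z : Fˣ) :
    χ (z : F) ^ (Fintype.card Fˣ) = 1 := by
  rw [← map_pow, ← Units.val_pow_eq_pow_val, pow_card_eq_one, Units.val_one, map_one]

lemma orthog (χ : MulChar F ℂ) (hinj : ∀ z : Fˣ, χ (z : F) = 1 → z = 1) (z : Fˣ) :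
    ∑ a ∈ range (Fintype.card Fˣ), χ (z : F) ^ a =
      if z = 1 then (Fintype.card Fˣ : ℂ) else 0 := by
  split_ifs with h
  · subst h
    simp
  · have hne : χ (z : F) ≠ 1 := fun hc => h (hinj z hc)
    rw [geom_sum_eq hne, char_val_pow_card, sub_self, zero_div]

end Chars

section Core
variable {F : Type} [Field F] [Fintype F] [DecidableEq F] (θ : AddChar F ℂ) (T : MulChar F ℂ)

lemma char_mul_inv_apply (χ : MulChar F ℂ) (u : Fˣ) :
    χ (u : F) * χ⁻¹ (u : F) = 1 := by
  rw [← MulChar.mul_apply, mul_inv_cancel, MulChar.one_apply_coe]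

lemma char_inv_val (χ : MulChar F ℂ) (u : Fˣ) :
    χ ((u⁻¹ : Fˣ) : F) = (χ (u : F))⁻¹ := by
  refine eq_inv_of_mul_eq_one_left ?_
  rw [← map_mul, ← Units.val_mul, inv_mul_cancel, Units.val_one, map_one]

lemma dwork_inner_sum (d a d' : ℕ) (hdd' : d * d' ≡ 1 [MOD Fintype.card Fˣ])
    (hco' : (Nat.card Fˣ).Coprime d') (t : Fˣ) :
    ∑ x : Fˣ, ((T ^ (d * a))⁻¹) (x : F) * θ ((t : F) * (x : F) ^ d)
      = (T ^ a) (t : F) * gaussSum ((T ^ a)⁻¹) θ := by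
  have hmod : Fintype.card Fˣ = Nat.card Fˣ := (Nat.card_eq_fintype_card).symm
  -- reindex x = y ^ d'
  rw [← Fintype.sum_equiv (powCoprime hco')
    (fun y : Fˣ => ((T ^ a)⁻¹) (y : F) * θ ((t : F) * (y : F)))
    (fun x : Fˣ => ((T ^ (d * a))⁻¹) (x : F) * θ ((t : F) * (x : F) ^ d))
    ?_]
  · -- ∑ y, ((T^a)⁻¹) y * θ (t y) = T^a t * gaussSum (T^a)⁻¹ θ
    rw [sum_units_of_zero (fun x : F => ((T ^ a)⁻¹) x * θ ((t : F) * x))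
      (by simp [MulChar.map_zero])]
    have hgs : ∑ x : F, ((T ^ a)⁻¹) x * θ ((t : F) * x)
        = gaussSum ((T ^ a)⁻¹) (AddChar.mulShift θ (t : F)) := by
      unfold gaussSum
      simp [AddChar.mulShift_apply]
    rw [hgs]
    have hkey := gaussSum_mulShift ((T ^ a)⁻¹) θ t
    have h1 := char_mul_inv_apply (T ^ a) t
    calc gaussSum ((T ^ a)⁻¹) (AddChar.mulShift θ (t : F))
        = ((T ^ a) (t : F) * ((T ^ a)⁻¹) (t : F)) *
            gaussSum ((T ^ a)⁻¹) (AddChar.mulShift θ (t : F)) := by rw [h1, one_mul]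
      _ = (T ^ a) (t : F) * gaussSum ((T ^ a)⁻¹) θ := by
            rw [mul_assoc, hkey]
  · intro y
    have hy1 : ((powCoprime hco' y : Fˣ) : F) = (y : F) ^ d' := by
      rw [powCoprime_apply, Units.val_pow_eq_pow_val]
    have hy2 : (((powCoprime hco' y : Fˣ) : F)) ^ d = (y : F) := by
      rw [hy1, ← pow_mul, ← Units.val_pow_eq_pow_val,
        upow_congr y (show d' * d ≡ 1 [MOD Fintype.card Fˣ] by rwa [Nat.mul_comm d' d]),
        pow_one]
    have hy3 : ((T ^ (d * a))⁻¹) ((powCoprime hco' y : Fˣ) : F) = ((T ^ a)⁻¹) (y : F) := by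
      rw [hy1, map_pow, ← MulChar.pow_apply_coe]
      congr 1
      rw [inv_pow, ← pow_mul]
      congr 1
      refine Tpow_congr T ?_
      have h2 := Nat.ModEq.mul_left a hdd'
      simpa [mul_comm, mul_left_comm, mul_assoc] using h2
    rw [hy3, hy2]

lemma dwork_fourier (d : ℕ)
    (hinj : ∀ z : Fˣ, (T ^ d) (z : F) = 1 → z = 1) (u : Fˣ) :
    ∑ a ∈ range (Fintype.card Fˣ), gaussSum (T ^ (d * a)) θ * ((T ^ (d * a))⁻¹) (u : F)
      = (Fintype.card Fˣ : ℂ) * θ (u : F) := by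
  have hgs : ∀ a : ℕ, gaussSum (T ^ (d * a)) θ = ∑ x : Fˣ, (T ^ (d * a)) (x : F) * θ (x : F) :=
    fun a => (sum_units_of_zero (fun x : F => (T ^ (d * a)) x * θ x)
      (by simp [MulChar.map_zero])).symm
  calc ∑ a ∈ range (Fintype.card Fˣ), gaussSum (T ^ (d * a)) θ * ((T ^ (d * a))⁻¹) (u : F)
      = ∑ a ∈ range (Fintype.card Fˣ), ∑ x : Fˣ,
          θ (x : F) * ((T ^ d) (((x * u⁻¹ : Fˣ) : F))) ^ a := by
        refine Finset.sum_congr rfl fun a _ => ?_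
        rw [hgs a, Finset.sum_mul]
        refine Finset.sum_congr rfl fun x _ => ?_
        have expand : ((T ^ d) (((x * u⁻¹ : Fˣ) : F))) ^ a
            = (T ^ (d * a)) (x : F) * ((T ^ (d * a)) ((u : F)))⁻¹ := by
          rw [← MulChar.pow_apply_coe, ← pow_mul, Units.val_mul,
            map_mul, char_inv_val]
        rw [expand, MulChar.inv_apply_eq_inv']
        ring
      _ = ∑ x : Fˣ, θ (x : F) * ∑ a ∈ range (Fintype.card Fˣ),
            ((T ^ d) (((x * u⁻¹ : Fˣ) : F))) ^ a := by
        rw [Finset.sum_comm]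
        exact Finset.sum_congr rfl fun x _ => (Finset.mul_sum _ _ _).symm
      _ = ∑ x : Fˣ, θ (x : F) * (if x = u then (Fintype.card Fˣ : ℂ) else 0) := by
        refine Finset.sum_congr rfl fun x _ => ?_
        rw [orthog (T ^ d) hinj (x * u⁻¹)]
        congr 1
        simp [mul_inv_eq_one]
      _ = (Fintype.card Fˣ : ℂ) * θ (u : F) := by
        simp [mul_ite, mul_zero, mul_comm]
end Core

section L3
variable {F : Type} [Field F] [Fintype F] [DecidableEq F] (θ : AddChar F ℂ) (T : MulChar F ℂ)

lemma big_sum_eq (d d' : ℕ) (hdd' : d * d' ≡ 1 [MOD Fintype.card Fˣ])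
    (hco' : (Nat.card Fˣ).Coprime d')
    (hinj : ∀ z : Fˣ, (T ^ d) (z : F) = 1 → z = 1)
    (c0 : F) (hc0 : c0 ≠ 0) :
    ∑ t : Fˣ, ∑ w : Fin d → Fˣ,
        (∏ i, θ ((t : F) * (w i : F) ^ d)) * θ (c0 * ((t : F) * ∏ i, (w i : F)))
      = ∑ a ∈ Finset.range (Fintype.card Fˣ),
          gaussSum ((T ^ a)⁻¹) θ ^ d * gaussSum (T ^ (d * a)) θ * ((T ^ (d * a))⁻¹) c0 := by
  have hn0 : ((Fintype.card Fˣ : ℂ)) ≠ 0 := Nat.cast_ne_zero.mpr Fintype.card_ne_zero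
  refine mul_left_cancel₀ hn0 ?_
  set u0 : Fˣ := Units.mk0 c0 hc0 with hu0
  have hcoe : ∀ (t : Fˣ) (w : Fin d → Fˣ),
      ((u0 * t * ∏ i, w i : Fˣ) : F) = c0 * ((t : F) * ∏ i, (w i : F)) := by
    intro t w
    rw [Units.val_mul, Units.val_mul, mul_assoc]
    congr 2
    exact map_prod (Units.coeHom F) w Finset.univ
  calc (Fintype.card Fˣ : ℂ) * ∑ t : Fˣ, ∑ w : Fin d → Fˣ,
        (∏ i, θ ((t : F) * (w i : F) ^ d)) * θ (c0 * ((t : F) * ∏ i, (w i : F)))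
      -- Step AB: Fourier expansion of the last factor
      = ∑ t : Fˣ, ∑ w : Fin d → Fˣ, ∑ a ∈ Finset.range (Fintype.card Fˣ),
          (∏ i, θ ((t : F) * (w i : F) ^ d)) *
            (gaussSum (T ^ (d * a)) θ * ((T ^ (d * a))⁻¹) (((u0 * t * ∏ i, w i : Fˣ) : F))) := by
        rw [Finset.mul_sum]
        refine Finset.sum_congr rfl fun t _ => ?_
        rw [Finset.mul_sum]
        refine Finset.sum_congr rfl fun w _ => ?_
        rw [← Finset.mul_sum, dwork_fourier θ T d hinj (u0 * t * ∏ i, w i), hcoe]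
        ring
      -- Step C: swap sums
      _ = ∑ a ∈ Finset.range (Fintype.card Fˣ), ∑ t : Fˣ, ∑ w : Fin d → Fˣ,
          (∏ i, θ ((t : F) * (w i : F) ^ d)) *
            (gaussSum (T ^ (d * a)) θ * ((T ^ (d * a))⁻¹) (((u0 * t * ∏ i, w i : Fˣ) : F))) := by
        refine Eq.trans (Finset.sum_congr rfl fun t _ => Finset.sum_comm) ?_
        exact Finset.sum_comm
      -- Step D: factor the character and collapse the w-sum into a d-th power
      _ = ∑ a ∈ Finset.range (Fintype.card Fˣ),
          gaussSum (T ^ (d * a)) θ * ((T ^ (d * a))⁻¹) c0 *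
            ∑ t : Fˣ, ((T ^ (d * a))⁻¹) ((t : F)) *
              (∑ x : Fˣ, ((T ^ (d * a))⁻¹) ((x : F)) * θ ((t : F) * (x : F) ^ d)) ^ d := by
        refine Finset.sum_congr rfl fun a _ => ?_
        rw [Finset.mul_sum]
        refine Finset.sum_congr rfl fun t _ => ?_
        rw [Fintype.sum_pow (fun x : Fˣ => ((T ^ (d * a))⁻¹) ((x : F)) * θ ((t : F) * (x : F) ^ d)) d,
          Finset.mul_sum, Finset.mul_sum]
        refine Finset.sum_congr rfl fun w _ => ?_
        have hsplit : ((T ^ (d * a))⁻¹) (((u0 * t * ∏ i, w i : Fˣ) : F))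
            = ((T ^ (d * a))⁻¹) c0 * (((T ^ (d * a))⁻¹) ((t : F)) *
                ∏ i, ((T ^ (d * a))⁻¹) ((w i : F))) := by
          rw [hcoe, map_mul, map_mul, map_prod]
        rw [hsplit, Finset.prod_mul_distrib]
        ring
      -- Step E: evaluate the inner Gauss sums and the t-sum
      _ = (Fintype.card Fˣ : ℂ) * ∑ a ∈ Finset.range (Fintype.card Fˣ),
          gaussSum ((T ^ a)⁻¹) θ ^ d * gaussSum (T ^ (d * a)) θ * ((T ^ (d * a))⁻¹) c0 := by
        rw [Finset.mul_sum]
        refine Finset.sum_congr rfl fun a _ => ?_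
        have hE : ∑ t : Fˣ, ((T ^ (d * a))⁻¹) ((t : F)) *
              (∑ x : Fˣ, ((T ^ (d * a))⁻¹) ((x : F)) * θ ((t : F) * (x : F) ^ d)) ^ d
            = (Fintype.card Fˣ : ℂ) * gaussSum ((T ^ a)⁻¹) θ ^ d := by
          have ht : ∀ t : Fˣ, ((T ^ (d * a))⁻¹) ((t : F)) *
              (∑ x : Fˣ, ((T ^ (d * a))⁻¹) ((x : F)) * θ ((t : F) * (x : F) ^ d)) ^ d
              = gaussSum ((T ^ a)⁻¹) θ ^ d := by
            intro t
            rw [dwork_inner_sum θ T d a d' hdd' hco' t, mul_pow, ← mul_assoc]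
            have hTd : (T ^ a) ((t : F)) ^ d = (T ^ (d * a)) ((t : F)) := by
              rw [← MulChar.pow_apply_coe, ← pow_mul, mul_comm a d]
            rw [hTd, mul_comm (((T ^ (d * a))⁻¹) ((t : F))) _, char_mul_inv_apply, one_mul]
          rw [Finset.sum_congr rfl fun t _ => ht t, Finset.sum_const, Finset.card_univ,
            nsmul_eq_mul]
        rw [hE]
        ring
end L3

section Affine
variable {F : Type} [Field F] [Fintype F] [DecidableEq F] (θ : AddChar F ℂ)

lemma addchar_map_sum {ι : Type*} [DecidableEq ι] (s : Finset ι) (f : ι → F) :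
    θ (∑ i ∈ s, f i) = ∏ i ∈ s, θ (f i) := by
  induction s using Finset.induction with
  | empty => simp
  | insert _ _ h ih => rw [Finset.sum_insert h, Finset.prod_insert h, AddChar.map_add_eq_mul, ih]

lemma sum_pi_units {d : ℕ} (g : (Fin d → F) → ℂ) (hg : ∀ v, (∃ i, v i = 0) → g v = 0) :
    ∑ v : Fin d → F, g v = ∑ w : Fin d → Fˣ, g (fun i => (w i : F)) := by
  have himg : ∀ v : Fin d → F,
      v ∈ Finset.image (fun w : Fin d → Fˣ => (fun i => (w i : F))) Finset.univ ↔
        ∀ i, v i ≠ 0 := by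
    intro v
    constructor
    · rintro hv i
      simp only [Finset.mem_image] at hv
      obtain ⟨w, _, rfl⟩ := hv
      exact (w i).ne_zero
    · intro hv
      simp only [Finset.mem_image]
      exact ⟨fun i => Units.mk0 (v i) (hv i), Finset.mem_univ _, rfl⟩
  rw [show (∑ w : Fin d → Fˣ, g (fun i => (w i : F)))
      = ∑ v ∈ Finset.image (fun w : Fin d → Fˣ => (fun i => (w i : F))) Finset.univ, g v from
    (Finset.sum_image (fun w1 _ w2 _ h => funext fun i => Units.ext (congrFun h i))).symm]
  refine (Finset.sum_subset (Finset.subset_univ _) ?_).symm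
  intro v _ hv
  refine hg v ?_
  by_contra hcon
  push_neg at hcon
  exact hv ((himg v).mpr hcon)

lemma affine_char_sum (hθ : θ ≠ 1) (d : ℕ) (hd0 : d ≠ 0) (hdodd : Odd d) (lam : F)
    (hdco : (Nat.card Fˣ).Coprime d) (t : Fˣ) :
    ∑ v : Fin d → F, θ ((t : F) * (∑ i, v i ^ d - (d : F) * lam * ∏ i, v i))
      = 1 + ∑ w : Fin d → Fˣ,
          (∏ i, θ ((t : F) * (w i : F) ^ d)) *
            θ ((-(d : F) * lam) * ((t : F) * ∏ i, (w i : F))) := by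
  have hprim := AddChar.IsPrimitive.of_ne_one hθ
  have hsum0 : ∑ x : F, θ ((t : F) * x) = 0 := by
    have h := AddChar.sum_mulShift (ψ := θ) (t : F) hprim
    rw [if_neg t.ne_zero] at h
    push_cast at h
    rw [← h]
    exact Finset.sum_congr rfl fun x _ => by rw [mul_comm]
  have hinjpow : Function.Injective (fun x : F => x ^ d) := by
    intro x y hxy
    simp only at hxy
    rcases eq_or_ne x 0 with rfl | hx
    · rw [zero_pow hd0] at hxy
      exact ((pow_eq_zero_iff hd0).mp hxy.symm).symm
    rcases eq_or_ne y 0 with rfl | hy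
    · rw [zero_pow hd0] at hxy
      exact absurd hxy ((pow_ne_zero_iff hd0).mpr hx)
    have heq : Units.mk0 x hx ^ d = Units.mk0 y hy ^ d := by
      ext; push_cast; exact hxy
    have h2 : Units.mk0 x hx = Units.mk0 y hy := (powCoprime hdco).injective (by
      rw [powCoprime_apply, powCoprime_apply]; exact heq)
    exact congrArg Units.val h2
  have hsum0' : ∑ x : F, θ ((t : F) * x ^ d) = 0 := by
    calc ∑ x : F, θ ((t : F) * x ^ d) = ∑ x : F, θ ((t : F) * x) :=
          Fintype.sum_bijective _ ⟨hinjpow, Finite.surjective_of_injective hinjpow⟩ _ _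
            (fun x => rfl)
      _ = 0 := hsum0
  have hsumU : ∑ x : Fˣ, θ ((t : F) * (x : F)) = -1 := by
    have h := sum_F_split (fun x : F => θ ((t : F) * x))
    rw [hsum0] at h
    simp only [mul_zero, AddChar.map_zero_eq_one] at h
    exact eq_neg_of_add_eq_zero_right h.symm
  have hsumU' : ∑ x : Fˣ, θ ((t : F) * (x : F) ^ d) = -1 := by
    rw [Fintype.sum_equiv (powCoprime hdco)
      (fun x : Fˣ => θ ((t : F) * (x : F) ^ d))
      (fun u : Fˣ => θ ((t : F) * (u : F)))
      (fun x => by simp [powCoprime_apply]), hsumU]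
  have hAsum : ∑ w : Fin d → Fˣ, ∏ i, θ ((t : F) * (w i : F) ^ d) = -1 := by
    rw [← Fintype.sum_pow (fun x : Fˣ => θ ((t : F) * (x : F) ^ d)) d, hsumU']
    exact Odd.neg_one_pow hdodd
  have hpoint : ∀ v : Fin d → F,
      θ ((t : F) * (∑ i, v i ^ d - (d : F) * lam * ∏ i, v i))
        = (∏ i, θ ((t : F) * v i ^ d)) * θ ((-(d : F) * lam) * ((t : F) * ∏ i, v i)) := by
    intro v
    rw [← addchar_map_sum θ Finset.univ (fun i => (t : F) * v i ^ d), ← AddChar.map_add_eq_mul]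
    congr 1
    rw [mul_sub, Finset.mul_sum]
    ring
  calc ∑ v : Fin d → F, θ ((t : F) * (∑ i, v i ^ d - (d : F) * lam * ∏ i, v i))
      = ∑ v : Fin d → F, ((∏ i, θ ((t : F) * v i ^ d)) +
          (∏ i, θ ((t : F) * v i ^ d)) *
            (θ ((-(d : F) * lam) * ((t : F) * ∏ i, v i)) - 1)) := by
        refine Finset.sum_congr rfl fun v _ => ?_
        rw [hpoint v]; ring
      _ = (∑ x : F, θ ((t : F) * x ^ d)) ^ d +
          ∑ w : Fin d → Fˣ, (∏ i, θ ((t : F) * (w i : F) ^ d)) *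
            (θ ((-(d : F) * lam) * ((t : F) * ∏ i, (w i : F))) - 1) := by
        rw [Finset.sum_add_distrib]
        congr 1
        · rw [Fintype.sum_pow]
        · refine sum_pi_units _ ?_
          rintro v ⟨i, hi⟩
          have hz : ∏ j, v j = 0 := Finset.prod_eq_zero (Finset.mem_univ i) hi
          simp [hz]
      _ = 1 + ∑ w : Fin d → Fˣ,
          (∏ i, θ ((t : F) * (w i : F) ^ d)) *
            θ ((-(d : F) * lam) * ((t : F) * ∏ i, (w i : F))) := by
        rw [hsum0', zero_pow hd0, zero_add]
        simp_rw [mul_sub, mul_one]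
        rw [Finset.sum_sub_distrib, hAsum]
        ring
end Affine

theorem stmt_0 (p r d : ℕ) (hp : p.Prime) (hpodd : Odd p) (hd : d.Prime) (hdodd : Odd d)
    (hr : 0 < r) (hpd : p ≠ d)
    (F : Type) [Field F] [Fintype F] (hq : Fintype.card F = p ^ r)
    (hqd : ¬ p ^ r ≡ 1 [MOD d])
    (lam : F) (hlam : lam ≠ 0)
    (θ : AddChar F ℂ) (hθ : θ ≠ 1)
    (T : MulChar F ℂ) (hT : ∀ χ : MulChar F ℂ, ∃ n : ℕ, χ = T ^ n) :
    ((p ^ r * (p ^ r - 1) * dworkProjCount F d lam : ℕ) : ℂ) =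
      ((p : ℂ) ^ r) ^ d - 1 +
        ∑ a ∈ Finset.range (p ^ r - 1),
          gaussSum ((T ^ a)⁻¹) θ ^ d * gaussSum (T ^ (d * a)) θ *
            ((T ^ (d * a))⁻¹) (-(d : F) * lam) := by

  classical
  have hp2 : 2 ≤ p := hp.two_le
  have hp3 : 3 ≤ p := by
    have hne2 : p ≠ 2 := by
      rintro rfl
      exact (by decide : ¬ Odd 2) hpodd
    omega
  have hq3 : 3 ≤ p ^ r := le_trans hp3 (Nat.le_self_pow hr.ne' p)
  have hcard : Fintype.card F = p ^ r := hq
  have hcardU : Fintype.card Fˣ = p ^ r - 1 := by rw [Fintype.card_units, hcard]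
  have hd0 : d ≠ 0 := hd.pos.ne'
  have hchar : ringChar F = p := by
    obtain ⟨m, hm, hcard2⟩ := FiniteField.card F (ringChar F)
    have hdvd : ringChar F ∣ p ^ r := by
      rw [← hcard, hcard2]
      exact dvd_pow_self _ m.pos.ne'
    exact (Nat.prime_dvd_prime_iff_eq hm hp).mp (hm.dvd_of_dvd_pow hdvd)
  have hdF : (d : F) ≠ 0 := by
    intro hdf
    have hdvd : ringChar F ∣ d := (CharP.cast_eq_zero_iff F (ringChar F) d).mp hdf
    rw [hchar] at hdvd
    exact hpd ((Nat.prime_dvd_prime_iff_eq hp hd).mp hdvd)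
  have hc0 : -(d : F) * lam ≠ 0 := mul_ne_zero (neg_ne_zero.mpr hdF) hlam
  have hndvd : ¬ d ∣ p ^ r - 1 := by
    intro hdvd
    exact hqd (((Nat.modEq_iff_dvd' (Nat.one_le_pow r p (by omega))).mpr hdvd).symm)
  have hco : Nat.Coprime d (p ^ r - 1) := (Nat.Prime.coprime_iff_not_dvd hd).mpr hndvd
  have hcoN : (Nat.card Fˣ).Coprime d := by
    rw [Nat.card_eq_fintype_card, hcardU]
    exact hco.symm
  obtain ⟨d', -, hd'⟩ := Nat.exists_mul_mod_eq_one_of_coprime hco (by omega)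
  have hdd' : d * d' ≡ 1 [MOD Fintype.card Fˣ] := by
    rw [hcardU]
    show d * d' % (p ^ r - 1) = 1 % (p ^ r - 1)
    rw [hd', Nat.mod_eq_of_lt (by omega)]
  have hco' : (Nat.card Fˣ).Coprime d' := by
    rw [Nat.card_eq_fintype_card, hcardU, Nat.coprime_iff_gcd_eq_one]
    have h3 : (p ^ r - 1).gcd d' ∣ (p ^ r - 1) := Nat.gcd_dvd_left _ _
    have h2 : (p ^ r - 1).gcd d' ∣ d * d' := Dvd.dvd.mul_left (Nat.gcd_dvd_right _ _) d
    have h4 := (Nat.dvd_mod_iff h3).mpr h2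
    rw [hd'] at h4
    exact Nat.dvd_one.mp h4
  have hinj := T_inj T hT
  have hinjd : ∀ z : Fˣ, (T ^ d) ((z : F)) = 1 → z = 1 := by
    intro z hz
    have h2 : T (((z : F)) ^ d) = (T ^ d) ((z : F)) := by
      rw [map_pow, MulChar.pow_apply_coe]
    have h1 : T (((z ^ d : Fˣ) : F)) = 1 := by
      rw [Units.val_pow_eq_pow_val, h2, hz]
    have hz1 : z ^ d = 1 := hinj _ h1
    apply (powCoprime hcoN).injective
    rw [powCoprime_apply, powCoprime_apply, one_pow, hz1]
  have hq1 : 1 ≤ p ^ r := by omega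
  -- the counting argument
  set c : (Fin d → F) → F := fun v => ∑ i, v i ^ d - (d : F) * lam * ∏ i, v i with hcdef
  set NS := Nat.card (SolT F d lam) with hNSdef
  set B := ∑ a ∈ Finset.range (Fintype.card Fˣ),
      gaussSum ((T ^ a)⁻¹) θ ^ d * gaussSum (T ^ (d * a)) θ *
        ((T ^ (d * a))⁻¹) (-(d : F) * lam) with hBdef
  have horth : ∀ v : Fin d → F,
      ∑ tt : F, θ (tt * c v) = if c v = 0 then ((p ^ r : ℕ) : ℂ) else 0 := by
    intro v
    have h := AddChar.sum_mulShift (ψ := θ) (c v) (AddChar.IsPrimitive.of_ne_one hθ)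
    rw [hcard] at h
    rw [h]
    split_ifs <;> simp
  have hfilter : (Finset.univ.filter (fun v : Fin d → F => v ≠ 0 ∧
      ∑ i, v i ^ d = (d : F) * lam * ∏ i, v i)).card = NS := by
    rw [hNSdef, Nat.card_eq_fintype_card, Fintype.card_subtype]
  have hE1 : ∑ v : Fin d → F, ∑ tt : F, θ (tt * c v)
      = ((p ^ r : ℕ) : ℂ) * NS + ((p ^ r : ℕ) : ℂ) := by
    rw [Finset.sum_congr rfl (fun v _ => horth v)]
    have hc0v : c 0 = 0 := by
      simp [hcdef, zero_pow hd0, Finset.prod_const, Fintype.card_fin]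
    have hpt : ∀ v : Fin d → F, (if c v = 0 then ((p ^ r : ℕ) : ℂ) else 0)
        = (if (v ≠ 0 ∧ ∑ i, v i ^ d = (d : F) * lam * ∏ i, v i) then ((p ^ r : ℕ) : ℂ) else 0)
          + (if v = 0 then ((p ^ r : ℕ) : ℂ) else 0) := by
      intro v
      rcases eq_or_ne v 0 with rfl | hv
      · rw [if_pos hc0v, if_pos rfl, if_neg (fun h => h.1 rfl), zero_add]
      · have hiff : c v = 0 ↔ (∑ i, v i ^ d = (d : F) * lam * ∏ i, v i) := sub_eq_zero
        simp [hv, hiff]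
    rw [Finset.sum_congr rfl (fun v _ => hpt v), Finset.sum_add_distrib]
    congr 1
    · rw [Finset.sum_ite, Finset.sum_const_zero, add_zero, Finset.sum_const, hfilter,
        nsmul_eq_mul]
      ring
    · rw [Finset.sum_ite_eq' Finset.univ (0 : Fin d → F) (fun _ => ((p ^ r : ℕ) : ℂ))]
      simp
  have hE2 : ∑ v : Fin d → F, ∑ tt : F, θ (tt * c v)
      = ((p ^ r : ℕ) : ℂ) ^ d + ((p ^ r - 1 : ℕ) : ℂ) + B := by
    rw [Finset.sum_comm]
    rw [sum_F_split (fun tt => ∑ v : Fin d → F, θ (tt * c v))]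
    have h0 : ∑ v : Fin d → F, θ ((0 : F) * c v) = ((p ^ r : ℕ) : ℂ) ^ d := by
      simp only [zero_mul, AddChar.map_zero_eq_one, Finset.sum_const, Finset.card_univ,
        nsmul_eq_mul, mul_one]
      rw [Fintype.card_fun, hcard, Fintype.card_fin]
      push_cast
      ring
    have hunit : ∀ t : Fˣ, ∑ v : Fin d → F, θ ((t : F) * c v)
        = 1 + ∑ w : Fin d → Fˣ, (∏ i, θ ((t : F) * (w i : F) ^ d)) *
            θ ((-(d : F) * lam) * ((t : F) * ∏ i, (w i : F))) :=
      fun t => affine_char_sum θ hθ d hd0 hdodd lam hcoN t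
    rw [h0, Finset.sum_congr rfl (fun t _ => hunit t), Finset.sum_add_distrib,
      Finset.sum_const, Finset.card_univ, nsmul_eq_mul, mul_one,
      big_sum_eq θ T d d' hdd' hco' hinjd (-(d : F) * lam) hc0, ← hBdef, hcardU]
    ring
  have hcast : ((p ^ r - 1 : ℕ) : ℂ) = ((p ^ r : ℕ) : ℂ) - 1 := by
    rw [Nat.cast_sub hq1, Nat.cast_one]
  have hqNS : ((p ^ r : ℕ) : ℂ) * NS = ((p ^ r : ℕ) : ℂ) ^ d - 1 + B := by
    have hh := hE1.symm.trans hE2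
    rw [hcast] at hh
    linear_combination hh
  have hcount : (p ^ r - 1) * dworkProjCount F d lam = NS := by
    rw [hNSdef, ← card_sol_eq hd0, hcard]
  calc ((p ^ r * (p ^ r - 1) * dworkProjCount F d lam : ℕ) : ℂ)
      = ((p ^ r : ℕ) : ℂ) * (((p ^ r - 1) * dworkProjCount F d lam : ℕ) : ℂ) := by
        push_cast
        ring
    _ = ((p ^ r : ℕ) : ℂ) * NS := by rw [hcount]
    _ = ((p ^ r : ℕ) : ℂ) ^ d - 1 + B := hqNS
    _ = ((p : ℂ) ^ r) ^ d - 1 +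
        ∑ a ∈ Finset.range (p ^ r - 1),
          gaussSum ((T ^ a)⁻¹) θ ^ d * gaussSum (T ^ (d * a)) θ *
            ((T ^ (d * a))⁻¹) (-(d : F) * lam) := by
        rw [hBdef, hcardU]
        push_cast
        ring
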